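/- The function g(x) = (1/2){ln((x−1)/(e·ln x)) + (ln x)/(x−1)} is (strictly) monotonically increasing on (1, ∞). -/
import Mathlib

noncomputable def gFun (x : ℝ) : ℝ :=
  (1/2) * (Real.log ((x - 1) / (Real.exp 1 * Real.log x)) + Real.log x / (x - 1))

noncomputable def hFun (x : ℝ) : ℝ :=
  (1/2) * ((Real.log (x - 1) - 1 - Real.log (Real.log x)) + Real.log x / (x - 1))

lemma hFun_eq {x : ℝ} (hx : 1 < x) : gFun x = hFun x := by
  have hx0 : (0:ℝ) < x := lt_trans one_pos hx
  have ha : (0:ℝ) < x - 1 := by linarith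
  have hL : 0 < Real.log x := Real.log_pos hx
  unfold gFun hFun
  rw [Real.log_div ha.ne' (by positivity), Real.log_mul (Real.exp_ne_zero 1) hL.ne',
    Real.log_exp]
  ring

lemma hFun_deriv {x : ℝ} (hx : 1 < x) :
    HasDerivAt hFun ((1/2) * ((1/(x-1) - x⁻¹/Real.log x) +
      (x⁻¹*(x-1) - Real.log x * 1)/(x-1)^2)) x := by
  rw [show hFun = fun y : ℝ => (1/2) * ((Real.log (y - 1) - 1 - Real.log (Real.log y)) + Real.log y / (y - 1)) from rfl]
  have hx0 : (0:ℝ) < x := lt_trans one_pos hx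
  have ha : (0:ℝ) < x - 1 := by linarith
  have hL : 0 < Real.log x := Real.log_pos hx
  have h1 : HasDerivAt (fun y : ℝ => Real.log (y - 1)) (1/(x-1)) x := by
    have := ((hasDerivAt_id x).sub_const 1).log ha.ne'
    simpa using this
  have hlogx : HasDerivAt Real.log x⁻¹ x := Real.hasDerivAt_log hx0.ne'
  have h2 : HasDerivAt (fun y : ℝ => Real.log (Real.log y)) (x⁻¹/Real.log x) x :=
    hlogx.log hL.ne'
  have h3 : HasDerivAt (fun y : ℝ => Real.log y / (y - 1))
      ((x⁻¹*(x-1) - Real.log x * 1)/(x-1)^2) x :=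
    hlogx.div ((hasDerivAt_id x).sub_const 1) ha.ne'
  have := (((h1.sub_const 1).sub h2).add h3).const_mul (1/2 : ℝ)
  simpa [hFun] using this

lemma deriv_pos {x : ℝ} (hx : 1 < x) :
    0 < (1/2 : ℝ) * ((1/(x-1) - x⁻¹/Real.log x) +
      (x⁻¹*(x-1) - Real.log x * 1)/(x-1)^2) := by
  have hx0 : (0:ℝ) < x := lt_trans one_pos hx
  have ha : (0:ℝ) < x - 1 := by linarith
  have hL : 0 < Real.log x := Real.log_pos hx
  have h1 : Real.log x < x - 1 := Real.log_lt_sub_one_of_pos hx0 (by linarith)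
  have h2 : x - 1 < x * Real.log x := by
    have h2' : Real.log x⁻¹ < x⁻¹ - 1 :=
      Real.log_lt_sub_one_of_pos (by positivity) (by
        intro h; rw [inv_eq_one] at h; linarith)
    rw [Real.log_inv] at h2'
    have : 1 - x⁻¹ < Real.log x := by linarith
    calc x - 1 = x * (1 - x⁻¹) := by field_simp
    _ < x * Real.log x := by exact mul_lt_mul_of_pos_left this hx0
  have key : 0 < (x - 1 - Real.log x) * (x * Real.log x - (x - 1)) :=
    mul_pos (by linarith) (by linarith)
  have heq : (1/2 : ℝ) * ((1/(x-1) - x⁻¹/Real.log x) +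
      (x⁻¹*(x-1) - Real.log x * 1)/(x-1)^2)
      = (x - 1 - Real.log x) * (x * Real.log x - (x - 1)) / (2 * x * Real.log x * (x-1)^2) := by
    field_simp
    ring
  rw [heq]
  positivity

/-- `g` is strictly monotonically increasing on `(1, ∞)`. -/
theorem stmt_9 : StrictMonoOn gFun (Set.Ioi (1:ℝ)) := by
  have hmono : StrictMonoOn hFun (Set.Ioi (1:ℝ)) := by
    apply strictMonoOn_of_deriv_pos (convex_Ioi 1)
    · intro x hx
      exact (hFun_deriv hx).continuousAt.continuousWithinAt
    · intro x hx
      rw [interior_Ioi] at hx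
      rw [(hFun_deriv hx).deriv]
      exact deriv_pos hx
  intro x hx y hy hxy
  rw [hFun_eq hx, hFun_eq hy]
  exact hmono hx hy hxy
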